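/- Let 1 < p < q < ∞ and let ρ : (0,∞) → (0,∞) be a continuous concave function satisfying ρ(st) ≤ max(1,s)·ρ(t) for all s,t > 0. Define f : (0,∞) → (0,∞) by f(t) = t^{1/p}·ρ(t^{1/q − 1/p}). Then f is strictly increasing and maps (0,∞) onto (0,∞); in particular f has an inverse f⁻¹ : (0,∞) → (0,∞), and f⁻¹ is a Young function, i.e. f⁻¹ is continuous, strictly increasing and convex on (0,∞), f⁻¹(t)/t → ∞ as t → ∞, and f⁻¹(t)/t → 0 as t → 0. -/

import Mathlib

open MeasureTheory Set Filter Topology ENNReal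

noncomputable section

/-- A Young function on `(0,∞)`: strictly increasing, continuous, convex,
positive, with `Φ(t)/t → 0` as `t → 0⁺` and `Φ(t)/t → ∞` as `t → ∞`. -/
def IsYoungFunction (Φ : ℝ → ℝ) : Prop :=
  StrictMonoOn Φ (Set.Ioi 0) ∧ ContinuousOn Φ (Set.Ioi 0) ∧
  ConvexOn ℝ (Set.Ioi 0) Φ ∧ (∀ t : ℝ, 0 < t → 0 < Φ t) ∧
  Filter.Tendsto (fun t => Φ t / t) (nhdsWithin 0 (Set.Ioi 0)) (nhds 0) ∧
  Filter.Tendsto (fun t => Φ t / t) Filter.atTop Filter.atTop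

/-- if `1 < p < q < ∞` and `ρ : (0,∞) → (0,∞)` is continuous, concave and
satisfies `ρ(st) ≤ max(1,s)·ρ(t)`, then `f(t) = t^(1/p)·ρ(t^(1/q−1/p))` is strictly
increasing from `(0,∞)` onto `(0,∞)`, and its inverse is a Young function. -/
lemma supporting_line (ρ : ℝ → ℝ) (hρconc : ConcaveOn ℝ (Set.Ioi 0) ρ)
    (hρpos : ∀ t : ℝ, 0 < t → 0 < ρ t)
    (hmono : ∀ ⦃s t : ℝ⦄, 0 < s → s ≤ t → ρ s ≤ ρ t)
    {u₀ : ℝ} (hu₀ : 0 < u₀) :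
    ∃ c d : ℝ, 0 ≤ c ∧ 0 ≤ d ∧ c + d * u₀ = ρ u₀ ∧ ∀ u, 0 < u → ρ u ≤ c + d * u := by
  set S : Set ℝ := {z | ∃ v, u₀ < v ∧ z = (ρ v - ρ u₀) / (v - u₀)} with hS
  have hne : S.Nonempty := ⟨_, u₀ + 1, by linarith, rfl⟩
  have hbdd : BddAbove S := by
    refine ⟨(ρ u₀ - ρ (u₀ / 2)) / (u₀ - u₀ / 2), ?_⟩
    rintro z ⟨v, hv, rfl⟩
    exact hρconc.slope_anti_adjacent (by simpa using half_pos hu₀)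
      (show v ∈ Ioi (0:ℝ) by exact lt_trans hu₀ hv) (by linarith) hv
  set d : ℝ := sSup S with hd
  have hd0 : 0 ≤ d := by
    have h1 : (ρ (u₀ + 1) - ρ u₀) / (u₀ + 1 - u₀) ∈ S := ⟨u₀ + 1, by linarith, rfl⟩
    have h2 : 0 ≤ (ρ (u₀ + 1) - ρ u₀) / (u₀ + 1 - u₀) := by
      have := hmono hu₀ (by linarith : u₀ ≤ u₀ + 1)
      have h3 : u₀ + 1 - u₀ = 1 := by ring
      rw [h3]; simpa using this
    exact le_trans h2 (le_csSup hbdd h1)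
  have hub : ∀ u, 0 < u → ρ u ≤ ρ u₀ + d * (u - u₀) := by
    intro u hu
    rcases lt_trichotomy u u₀ with h | h | h
    · have hub' : d ≤ (ρ u₀ - ρ u) / (u₀ - u) := by
        apply csSup_le hne
        rintro z ⟨v, hv, rfl⟩
        exact hρconc.slope_anti_adjacent hu (show v ∈ Ioi (0:ℝ) from lt_trans hu₀ hv) h hv
      have h4 : 0 < u₀ - u := by linarith
      rw [le_div_iff₀ h4] at hub'
      nlinarith
    · subst h; simp
    · have hmem : (ρ u - ρ u₀) / (u - u₀) ∈ S := ⟨u, h, rfl⟩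
      have h5 := le_csSup hbdd hmem
      have h4 : 0 < u - u₀ := by linarith
      rw [div_le_iff₀ h4] at h5
      nlinarith
  refine ⟨ρ u₀ - d * u₀, d, ?_, hd0, by ring, ?_⟩
  · by_contra hc
    push_neg at hc
    set c := ρ u₀ - d * u₀ with hcdef
    rcases eq_or_lt_of_le hd0 with h | h
    · have := hρpos u₀ hu₀; nlinarith
    · set u := -c / (2 * d) with hu
      have hu0 : 0 < u := div_pos (by linarith) (by linarith)
      have h6 := hub u hu0
      have h7 := hρpos u hu0
      have h8 : d * u = -c / 2 := by rw [hu]; field_simp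
      nlinarith
  · intro u hu
    have := hub u hu
    nlinarith

theorem class_P_functions_are_Young_functions
    (p q : ℝ) (hp : 1 < p) (hpq : p < q)
    (ρ : ℝ → ℝ) (hρcont : ContinuousOn ρ (Set.Ioi 0))
    (hρconc : ConcaveOn ℝ (Set.Ioi 0) ρ)
    (hρpos : ∀ t : ℝ, 0 < t → 0 < ρ t)
    (hρmul : ∀ s t : ℝ, 0 < s → 0 < t → ρ (s * t) ≤ max 1 s * ρ t) :
    StrictMonoOn (fun t : ℝ => t ^ (1/p) * ρ (t ^ (1/q - 1/p))) (Set.Ioi 0) ∧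
    (fun t : ℝ => t ^ (1/p) * ρ (t ^ (1/q - 1/p))) '' (Set.Ioi 0) = Set.Ioi 0 ∧
    ∃ g : ℝ → ℝ,
      (∀ t : ℝ, 0 < t → g (t ^ (1/p) * ρ (t ^ (1/q - 1/p))) = t) ∧
      (∀ s : ℝ, 0 < s → 0 < g s ∧ (g s) ^ (1/p) * ρ ((g s) ^ (1/q - 1/p)) = s) ∧
      IsYoungFunction g := by
  have hp0 : (0:ℝ) < p := by linarith
  have hq0 : (0:ℝ) < q := by linarith
  have hq1 : (1:ℝ) < q := by linarith
  set β : ℝ := 1/q - 1/p with hβdef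
  have hβ : β < 0 := by
    have : 1/q < 1/p := one_div_lt_one_div_of_lt hp0 hpq
    rw [hβdef]; linarith
  have hα0 : (0:ℝ) < 1/p := by positivity
  have hα1 : 1/p < 1 := by rw [div_lt_one hp0]; linarith
  have hγ0 : (0:ℝ) < 1/q := by positivity
  have hγ1 : 1/q < 1 := by rw [div_lt_one hq0]; linarith
  have hαβ : 1/p + β = 1/q := by simp [hβdef]
  set F : ℝ → ℝ := fun t : ℝ => t ^ (1/p) * ρ (t ^ β) with hF
  -- monotonicity of ρ
  have hmono : ∀ ⦃s t : ℝ⦄, 0 < s → s ≤ t → ρ s ≤ ρ t := by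
    intro s t hs hst
    have ht : 0 < t := lt_of_lt_of_le hs hst
    have h1 : s / t * t = s := div_mul_cancel₀ s ht.ne'
    have h2 := hρmul (s/t) t (div_pos hs ht) ht
    have h3 : max 1 (s/t) = 1 := max_eq_left ((div_le_one ht).2 hst)
    rw [h1, h3, one_mul] at h2
    exact h2
  -- lower multiplicative bound
  have hlow : ∀ s t : ℝ, 0 < s → 0 < t → min 1 s * ρ t ≤ ρ (s * t) := by
    intro s t hs ht
    have hst : 0 < s * t := mul_pos hs ht
    have h1 := hρmul s⁻¹ (s*t) (inv_pos.2 hs) hst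
    have h2 : s⁻¹ * (s*t) = t := by field_simp
    rw [h2] at h1
    rcases le_total s 1 with h | h
    · have h3 : (1:ℝ) ≤ s⁻¹ := by
        rw [← one_div]
        exact (le_div_iff₀ hs).2 (by linarith)
      rw [max_eq_right h3] at h1
      rw [min_eq_right h]
      have h4 : s * ρ t ≤ s * (s⁻¹ * ρ (s*t)) := mul_le_mul_of_nonneg_left h1 hs.le
      calc s * ρ t ≤ s * (s⁻¹ * ρ (s*t)) := h4
        _ = ρ (s * t) := by field_simp
    · have h3 : s⁻¹ ≤ 1 := by
        rw [← one_div]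
        exact (div_le_one hs).2 h
      rw [max_eq_left h3, one_mul] at h1
      rw [min_eq_left h, one_mul]
      exact h1
  have hρ1 : 0 < ρ 1 := hρpos 1 one_pos
  -- positivity of F
  have hFpos : ∀ t : ℝ, 0 < t → 0 < F t := fun t ht =>
    mul_pos (Real.rpow_pos_of_pos ht _) (hρpos _ (Real.rpow_pos_of_pos ht _))
  -- strict monotonicity of F
  have hFmono : StrictMonoOn F (Ioi 0) := by
    intro x hx y hy hxy
    simp only [mem_Ioi] at hx hy
    have hr : 1 < y / x := (one_lt_div hx).2 hxy
    have hr0 : 0 < y / x := by linarith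
    have hs1 : (y/x) ^ β < 1 := Real.rpow_lt_one_of_one_lt_of_neg hr hβ
    have hs0 : 0 < (y/x) ^ β := Real.rpow_pos_of_pos hr0 _
    have hxβ : 0 < x ^ β := Real.rpow_pos_of_pos hx _
    have hkey := hlow ((y/x)^β) (x^β) hs0 hxβ
    have hmul : (y/x)^β * x^β = y^β := by
      rw [← Real.mul_rpow (le_of_lt hr0) hx.le, div_mul_cancel₀ _ hx.ne']
    rw [hmul, min_eq_right hs1.le] at hkey
    have hyx : (y/x)^(1/p) * x^(1/p) = y^(1/p) := by
      rw [← Real.mul_rpow (le_of_lt hr0) hx.le, div_mul_cancel₀ _ hx.ne']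
    have h2 : (y/x)^(1/p) * (y/x)^β = (y/x)^(1/q) := by
      rw [← Real.rpow_add hr0, hαβ]
    have h3 : 1 < (y/x)^(1/q) := Real.one_lt_rpow_iff_of_pos hr0 |>.2 (Or.inl ⟨hr, hγ0⟩)
    have e : (y/x)^(1/q) * F x = y^(1/p) * ((y/x)^β * ρ (x^β)) := by
      simp only [hF]
      rw [← h2, ← hyx]; ring
    calc F x < (y/x)^(1/q) * F x := (lt_mul_iff_one_lt_left (hFpos x hx)).2 h3
      _ = y^(1/p) * ((y/x)^β * ρ (x^β)) := e
      _ ≤ y^(1/p) * ρ (y^β) :=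
          mul_le_mul_of_nonneg_left hkey (Real.rpow_nonneg hy.le _)
      _ = F y := rfl
  -- bounds
  have hB1 : ∀ t : ℝ, 1 ≤ t → ρ 1 * t^(1/q) ≤ F t := by
    intro t ht
    have ht0 : (0:ℝ) < t := by linarith
    have hb1 : t ^ β ≤ 1 := Real.rpow_le_one_of_one_le_of_nonpos ht hβ.le
    have hb0 : 0 < t ^ β := Real.rpow_pos_of_pos ht0 _
    have hkey := hlow (t^β) 1 hb0 one_pos
    rw [mul_one, min_eq_right hb1] at hkey
    have e : t^(1/p) * t^β = t^(1/q) := by rw [← Real.rpow_add ht0, hαβ]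
    calc ρ 1 * t^(1/q) = t^(1/p) * (t^β * ρ 1) := by rw [← e]; ring
      _ ≤ t^(1/p) * ρ (t^β) := mul_le_mul_of_nonneg_left hkey (Real.rpow_nonneg ht0.le _)
      _ = F t := rfl
  have hB2 : ∀ t : ℝ, 0 < t → t ≤ 1 → F t ≤ ρ 1 * t^(1/q) := by
    intro t ht0 ht
    have hb1 : (1:ℝ) ≤ t ^ β := Real.one_le_rpow_of_pos_of_le_one_of_nonpos ht0 ht hβ.le
    have hkey := hρmul (t^β) 1 (by positivity) one_pos
    rw [mul_one, max_eq_right hb1] at hkey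
    have e : t^(1/p) * t^β = t^(1/q) := by rw [← Real.rpow_add ht0, hαβ]
    calc F t = t^(1/p) * ρ (t^β) := rfl
      _ ≤ t^(1/p) * (t^β * ρ 1) := mul_le_mul_of_nonneg_left hkey (Real.rpow_nonneg ht0.le _)
      _ = ρ 1 * t^(1/q) := by rw [← e]; ring
  have hB3 : ∀ t : ℝ, 1 ≤ t → F t ≤ ρ 1 * t^(1/p) := by
    intro t ht
    have ht0 : (0:ℝ) < t := by linarith
    have hb1 : t ^ β ≤ 1 := Real.rpow_le_one_of_one_le_of_nonpos ht hβ.le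
    have hb0 : 0 < t ^ β := Real.rpow_pos_of_pos ht0 _
    calc F t = t^(1/p) * ρ (t^β) := rfl
      _ ≤ t^(1/p) * ρ 1 := mul_le_mul_of_nonneg_left (hmono hb0 hb1) (Real.rpow_nonneg ht0.le _)
      _ = ρ 1 * t^(1/p) := by ring
  have hB4 : ∀ t : ℝ, 0 < t → t ≤ 1 → ρ 1 * t^(1/p) ≤ F t := by
    intro t ht0 ht
    have hb1 : (1:ℝ) ≤ t ^ β := Real.one_le_rpow_of_pos_of_le_one_of_nonpos ht0 ht hβ.le
    calc ρ 1 * t^(1/p) = t^(1/p) * ρ 1 := by ring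
      _ ≤ t^(1/p) * ρ (t^β) := mul_le_mul_of_nonneg_left (hmono one_pos hb1) (Real.rpow_nonneg ht0.le _)
      _ = F t := rfl
  -- concavity of F
  have hFconc : ConcaveOn ℝ (Ioi 0) F := by
    refine ⟨convex_Ioi 0, ?_⟩
    intro x hx y hy a b ha hb hab
    have hz := (convex_Ioi (0:ℝ)) hx hy ha hb hab
    simp only [mem_Ioi, smul_eq_mul] at hx hy hz ⊢
    set z : ℝ := a * x + b * y with hzdef
    obtain ⟨c, d, hc, hd, heq, hline⟩ :=
      supporting_line ρ hρconc hρpos hmono (Real.rpow_pos_of_pos hz β)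
    have l1 : ρ (x^β) ≤ c + d * x^β := hline _ (Real.rpow_pos_of_pos hx _)
    have l2 : ρ (y^β) ≤ c + d * y^β := hline _ (Real.rpow_pos_of_pos hy _)
    have concα := (Real.concaveOn_rpow hα0.le hα1.le).2
      (mem_Ici.2 hx.le) (mem_Ici.2 hy.le) ha hb hab
    have concγ := (Real.concaveOn_rpow hγ0.le hγ1.le).2
      (mem_Ici.2 hx.le) (mem_Ici.2 hy.le) ha hb hab
    simp only [smul_eq_mul] at concα concγ
    have ex : x^(1/p) * x^β = x^(1/q) := by rw [← Real.rpow_add hx, hαβ]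
    have ey : y^(1/p) * y^β = y^(1/q) := by rw [← Real.rpow_add hy, hαβ]
    have ez : z^(1/p) * z^β = z^(1/q) := by rw [← Real.rpow_add hz, hαβ]
    have hxα : (0:ℝ) ≤ x ^ (1/p) := Real.rpow_nonneg hx.le _
    have hyα : (0:ℝ) ≤ y ^ (1/p) := Real.rpow_nonneg hy.le _
    calc a * F x + b * F y
        ≤ a * (x^(1/p) * (c + d * x^β)) + b * (y^(1/p) * (c + d * y^β)) := by
          refine add_le_add ?_ ?_
          · exact mul_le_mul_of_nonneg_left (mul_le_mul_of_nonneg_left l1 hxα) ha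
          · exact mul_le_mul_of_nonneg_left (mul_le_mul_of_nonneg_left l2 hyα) hb
      _ = c * (a * x^(1/p) + b * y^(1/p)) + d * (a * x^(1/q) + b * y^(1/q)) := by
          rw [← ex, ← ey]; ring
      _ ≤ c * z^(1/p) + d * z^(1/q) := by
          refine add_le_add ?_ ?_
          · exact mul_le_mul_of_nonneg_left concα hc
          · exact mul_le_mul_of_nonneg_left concγ hd
      _ = z^(1/p) * (c + d * z^β) := by rw [← ez]; ring
      _ = F z := by rw [heq]
  have hFcont : ContinuousOn F (Ioi 0) := hFconc.continuousOn isOpen_Ioi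
  -- image
  have hinvq : ∀ y : ℝ, 0 < y → ((y / ρ 1)^q)^(1/q) = y / ρ 1 := by
    intro y hy
    rw [← Real.rpow_mul (by positivity), mul_one_div_cancel hq0.ne', Real.rpow_one]
  have hIm : F '' Ioi 0 = Ioi 0 := by
    apply Subset.antisymm
    · rintro _ ⟨t, ht, rfl⟩; exact hFpos t ht
    · intro y hy
      simp only [mem_Ioi] at hy
      set a : ℝ := min 1 ((y / ρ 1)^q) with hadef
      set b : ℝ := max 1 ((y / ρ 1)^q) with hbdef
      have hyρ : 0 < (y / ρ 1)^q := Real.rpow_pos_of_pos (div_pos hy hρ1) _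
      have ha0 : 0 < a := lt_min one_pos hyρ
      have hab : a ≤ b := le_trans (min_le_left _ _) (le_max_left _ _)
      have hFa : F a ≤ y := by
        have h1 : a^(1/q) ≤ y / ρ 1 := by
          rw [← hinvq y hy]
          exact Real.rpow_le_rpow ha0.le (min_le_right _ _) hγ0.le
        calc F a ≤ ρ 1 * a^(1/q) := hB2 a ha0 (min_le_left _ _)
          _ ≤ ρ 1 * (y / ρ 1) := mul_le_mul_of_nonneg_left h1 hρ1.le
          _ = y := by field_simp
      have hFb : y ≤ F b := by
        have h1 : y / ρ 1 ≤ b^(1/q) := by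
          rw [← hinvq y hy]
          exact Real.rpow_le_rpow hyρ.le (le_max_right _ _) hγ0.le
        calc y = ρ 1 * (y / ρ 1) := by field_simp
          _ ≤ ρ 1 * b^(1/q) := mul_le_mul_of_nonneg_left h1 hρ1.le
          _ ≤ F b := hB1 b (le_max_left _ _)
      have hsub : Icc a b ⊆ Ioi 0 := fun u hu => lt_of_lt_of_le ha0 hu.1
      obtain ⟨t, htmem, hFt⟩ :=
        intermediate_value_Icc hab (hFcont.mono hsub) (⟨hFa, hFb⟩ : y ∈ Icc (F a) (F b))
      exact ⟨t, hsub htmem, hFt⟩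
  -- the inverse function
  set g : ℝ → ℝ := Function.invFunOn F (Ioi 0) with hgdef
  have hInj : InjOn F (Ioi 0) := hFmono.injOn
  have hgF : ∀ t : ℝ, 0 < t → g (F t) = t := fun t ht => hInj.leftInvOn_invFunOn ht
  have hFg : ∀ s : ℝ, 0 < s → 0 < g s ∧ F (g s) = s := by
    intro s hs
    have hsm : ∃ a ∈ Ioi (0:ℝ), F a = s := by
      have : s ∈ F '' Ioi 0 := by rw [hIm]; exact hs
      obtain ⟨a, ha, hfa⟩ := this
      exact ⟨a, ha, hfa⟩
    exact ⟨Function.invFunOn_mem hsm, Function.invFunOn_eq hsm⟩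
  have hFmonole : MonotoneOn F (Ioi 0) := hFmono.monotoneOn
  have hgmono : StrictMonoOn g (Ioi 0) := by
    intro s hs t ht hst
    simp only [mem_Ioi] at hs ht
    by_contra h
    push_neg at h
    have h1 : F (g t) ≤ F (g s) := hFmonole (hFg t ht).1 (hFg s hs).1 h
    rw [(hFg s hs).2, (hFg t ht).2] at h1
    linarith
  have hgmonole : MonotoneOn g (Ioi 0) := hgmono.monotoneOn
  have hgconv : ConvexOn ℝ (Ioi 0) g := by
    refine ⟨convex_Ioi 0, ?_⟩
    intro s1 hs1 s2 hs2 a b ha hb hab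
    have hsz := (convex_Ioi (0:ℝ)) hs1 hs2 ha hb hab
    simp only [mem_Ioi, smul_eq_mul] at hs1 hs2 hsz ⊢
    have hx := hFg s1 hs1
    have hy := hFg s2 hs2
    have hzz := (convex_Ioi (0:ℝ)) (mem_Ioi.2 hx.1) (mem_Ioi.2 hy.1) ha hb hab
    simp only [mem_Ioi, smul_eq_mul] at hzz
    have hconc := hFconc.2 (mem_Ioi.2 hx.1) (mem_Ioi.2 hy.1) ha hb hab
    simp only [smul_eq_mul] at hconc
    rw [hx.2, hy.2] at hconc
    have h1 : g (a * s1 + b * s2) ≤ g (F (a * g s1 + b * g s2)) :=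
      hgmonole (mem_Ioi.2 hsz) (mem_Ioi.2 (hFpos _ hzz)) hconc
    rw [hgF _ hzz] at h1
    exact h1
  have hgcont : ContinuousOn g (Ioi 0) := hgconv.continuousOn isOpen_Ioi
  have hF1 : F 1 = ρ 1 := by simp [hF]
  have hg1 : g (ρ 1) = 1 := by rw [← hF1]; exact hgF 1 one_pos
  -- inverse powers
  have hppow : ∀ u : ℝ, 0 < u → (u^(1/p))^p = u := by
    intro u hu
    rw [← Real.rpow_mul hu.le, one_div_mul_cancel hp0.ne', Real.rpow_one]
  -- limit at infinity
  have hlimtop : Tendsto (fun s => g s / s) atTop atTop := by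
    have hupper : Tendsto (fun s : ℝ => s^(p-1) / (ρ 1)^p) atTop atTop :=
      (tendsto_rpow_atTop (by linarith : (0:ℝ) < p - 1)).atTop_div_const
        (Real.rpow_pos_of_pos hρ1 p)
    apply tendsto_atTop_mono' atTop ?_ hupper
    filter_upwards [eventually_ge_atTop (max (ρ 1) 1)] with s hs
    have hs1 : ρ 1 ≤ s := le_trans (le_max_left _ _) hs
    have hs2 : (1:ℝ) ≤ s := le_trans (le_max_right _ _) hs
    have hs0 : (0:ℝ) < s := by linarith
    have hgs := hFg s hs0
    have hg1le : (1:ℝ) ≤ g s := by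
      have := hgmonole (mem_Ioi.2 hρ1) (mem_Ioi.2 hs0) hs1
      rwa [hg1] at this
    have hub := hB3 (g s) hg1le
    rw [hgs.2] at hub
    have h1 : s / ρ 1 ≤ (g s)^(1/p) := (div_le_iff₀ hρ1).2 (by linarith)
    have h2 : (s / ρ 1)^p ≤ ((g s)^(1/p))^p :=
      Real.rpow_le_rpow (by positivity) h1 hp0.le
    rw [hppow (g s) (by linarith)] at h2
    have h4 : (s / ρ 1)^p = s^p / (ρ 1)^p := Real.div_rpow hs0.le hρ1.le p
    have h6 : (s / ρ 1)^p / s = s^(p-1) / (ρ 1)^p := by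
      rw [h4, Real.rpow_sub hs0, Real.rpow_one]; ring
    rw [← h6]
    gcongr
  -- limit at zero
  have hlim0 : Tendsto (fun s => g s / s) (nhdsWithin 0 (Ioi 0)) (nhds 0) := by
    have hupper : Tendsto (fun s : ℝ => s^(p-1) / (ρ 1)^p) (nhdsWithin 0 (Ioi 0)) (nhds 0) := by
      have hc := (Real.continuousAt_rpow_const 0 (p-1) (Or.inr (by linarith))).tendsto
      rw [Real.zero_rpow (by intro h; linarith : p - 1 ≠ 0)] at hc
      have h2 := (hc.mono_left (nhdsWithin_le_nhds (s := Ioi (0:ℝ)))).div_const ((ρ 1)^p)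
      simpa using h2
    have hev1 : ∀ᶠ s in nhdsWithin (0:ℝ) (Ioi 0), 0 < s := self_mem_nhdsWithin
    have hev2 : ∀ᶠ s in nhdsWithin (0:ℝ) (Ioi 0), s < ρ 1 :=
      eventually_nhdsWithin_of_eventually_nhds (gt_mem_nhds hρ1)
    apply squeeze_zero' ?_ ?_ hupper
    · filter_upwards [hev1] with s hs
      exact div_nonneg (hFg s hs).1.le hs.le
    · filter_upwards [hev1, hev2] with s hs hsρ
      have hgs := hFg s hs
      have hgle1 : g s ≤ 1 := by
        have := hgmonole (mem_Ioi.2 hs) (mem_Ioi.2 hρ1) hsρ.le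
        rwa [hg1] at this
      have hlb := hB4 (g s) hgs.1 hgle1
      rw [hgs.2] at hlb
      have h1 : (g s)^(1/p) ≤ s / ρ 1 := (le_div_iff₀ hρ1).2 (by linarith)
      have h2 : ((g s)^(1/p))^p ≤ (s / ρ 1)^p :=
        Real.rpow_le_rpow (Real.rpow_nonneg hgs.1.le _) h1 hp0.le
      rw [hppow (g s) hgs.1] at h2
      have h4 : (s / ρ 1)^p = s^p / (ρ 1)^p := Real.div_rpow hs.le hρ1.le p
      have h6 : (s / ρ 1)^p / s = s^(p-1) / (ρ 1)^p := by
        rw [h4, Real.rpow_sub hs, Real.rpow_one]; ring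
      rw [← h6]
      gcongr
  refine ⟨hFmono, hIm, g, hgF, fun s hs => ⟨(hFg s hs).1, (hFg s hs).2⟩,
    hgmono, hgcont, hgconv, fun t ht => (hFg t ht).1, hlim0, hlimtop⟩
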